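/- Let σ_ω be a cyclic supercharacter modulo n, where ω is a unit modulo n, and set k = gcd(ω − 1, n). Then for every y, σ_ω(y + n/k) = e(1/k)·σ_ω(y), and σ_ω(−y) is the complex conjugate of σ_ω(y). -/

import Mathlib

open Finset Pointwise

/-- `e(θ) = exp(2πiθ)`. -/
noncomputable def e2 (θ : ℝ) : ℂ := Complex.exp (2 * Real.pi * Complex.I * θ)

/-- The cyclic supercharacter `σ_ω : ℤ/nℤ → ℂ` attached to a unit `ω` mod `n`:
`σ_ω(y) = ∑_{j=1}^{d} e(ω^j y / n)` where `d` is the multiplicative order of `ω`. -/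
noncomputable def cyclicSuperchar (n : ℕ) (ω : (ZMod n)ˣ) (y : ZMod n) : ℂ :=
  ∑ j ∈ Finset.Icc 1 (orderOf ω),
    e2 (((((ω ^ j : (ZMod n)ˣ) : ZMod n) * y).val : ℝ) / (n : ℝ))

/-- `H m`: the set of traces of matrices in `SU_m(ℂ)` (the filled `m`-cusped hypocycloid). -/
noncomputable def H (m : ℕ) : Set ℂ :=
  Set.range fun M : Matrix.specialUnitaryGroup (Fin m) ℂ =>
    Matrix.trace (M : Matrix (Fin m) (Fin m) ℂ)

/-- `P m`: the convex hull of `H m` (the filled regular `m`-gon). -/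
noncomputable def Pset (m : ℕ) : Set ℂ := convexHull ℝ (H m)

/-- `c_{j,k}` : the coefficient of `x^j` in the remainder of `x^k` mod `Φ_d(x)`. -/
noncomputable def cExp (d j k : ℕ) : ℤ :=
  (((Polynomial.X : Polynomial ℤ) ^ k) %ₘ Polynomial.cyclotomic d ℤ).coeff j

/-- The Laurent-polynomial map `g_d(z_1,…,z_{φ(d)}) = ∑_{k=1}^d ∏_j z_j^{c_{j,k}}`. -/
noncomputable def gphi (d : ℕ) (z : Fin (Nat.totient d) → ℂ) : ℂ :=
  ∑ k ∈ Finset.Icc 1 d, ∏ j : Fin (Nat.totient d), z j ^ (cExp d (j : ℕ) k)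

/-- The image of `g_d` restricted to the torus `𝕋^{φ(d)}`. -/
noncomputable def gImage (d : ℕ) : Set ℂ :=
  {w : ℂ | ∃ z : Fin (Nat.totient d) → ℂ, (∀ j, ‖z j‖ = 1) ∧ gphi d z = w}

/-- The `k`-fold Minkowski sum `A^{⊕k}` of a subset of `ℂ` with itself. -/
def minkSumPow (A : Set ℂ) (k : ℕ) : Set ℂ :=
  {z : ℂ | ∃ f : Fin k → ℂ, (∀ i, f i ∈ A) ∧ ∑ i, f i = z}

/-- Scaling a subset of `ℂ` by a real number. -/
def scale (r : ℝ) (A : Set ℂ) : Set ℂ := (fun z => (r : ℂ) * z) '' A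

/-- The sets `A k` fill out `B` as `k → ∞`. -/
def FillsOut (A : ℕ → Set ℂ) (B : Set ℂ) : Prop :=
  (∀ k, A k ⊆ B) ∧
    ∀ U : Set ℂ, IsOpen U → U.Nonempty → U ⊆ B → ∃ K : ℕ, ∀ k > K, (U ∩ A k).Nonempty

/-- A subset of `ℂ` has `k`-fold dihedral symmetry if it is stable under complex
conjugation and under rotation by `2π/k` about the origin. -/
def HasDihedralSymm (k : ℕ) (A : Set ℂ) : Prop :=
  (∀ z ∈ A, (starRingEnd ℂ) z ∈ A) ∧ ∀ z ∈ A, e2 (1 / k) * z ∈ A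

/-- The `k`-fold dihedral closure of a subset of `ℂ`. -/
def dihedralClosure (k : ℕ) (A : Set ℂ) : Set ℂ :=
  ⋂₀ {B : Set ℂ | A ⊆ B ∧ HasDihedralSymm k B}

/-- The Gauss sum `g_k(t) = ∑_{j=1}^{p} e(t j^k / p)` of order `k` mod `p`. -/
noncomputable def gaussG (p k : ℕ) (t : ZMod p) : ℂ :=
  ∑ j ∈ Finset.Icc 1 p, e2 ((((t * (j : ZMod p) ^ k).val : ℕ) : ℝ) / (p : ℝ))

/-- The Gauss sum `G(t,χ) = ∑_{j=1}^{p-1} χ(j) e(tj/p)` attached to a character `χ` mod `p`. -/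
noncomputable def GSum (p : ℕ) (χ : DirichletCharacter ℂ p) (t : ZMod p) : ℂ :=
  ∑ j ∈ Finset.Icc 1 (p - 1), χ (j : ZMod p) * e2 ((((t * (j : ZMod p)).val : ℕ) : ℝ) / (p : ℝ))

/-- For a cyclic supercharacter `σ_ω` mod `n` with `k = gcd(ω - 1, n)`,
one has `σ_ω(y + n/k) = e(1/k)·σ_ω(y)` and `σ_ω(-y) = conj(σ_ω(y))` for every `y`. -/
lemma e2_add' (a b : ℝ) : e2 (a + b) = e2 a * e2 b := by
  rw [e2, e2, e2, ← Complex.exp_add]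
  congr 1
  push_cast
  ring

lemma e2_int' (m : ℤ) : e2 (m : ℝ) = 1 := by
  rw [e2, show (2 * Real.pi * Complex.I * ((m:ℝ):ℂ)) = (m:ℤ) * (2 * Real.pi * Complex.I) by push_cast; ring]
  exact Complex.exp_int_mul_two_pi_mul_I m

lemma e2_add_int (x : ℝ) (m : ℤ) : e2 (x + m) = e2 x := by
  rw [e2_add', e2_int', mul_one]

lemma e2_conj' (x : ℝ) : (starRingEnd ℂ) (e2 x) = e2 (-x) := by
  rw [e2, e2, ← Complex.exp_conj]
  congr 1
  simp only [map_mul, Complex.conj_I, Complex.conj_ofReal, map_ofNat]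
  push_cast
  ring

lemma e2_add_nat (x : ℝ) (m : ℕ) : e2 (x + m) = e2 x := by
  have := e2_add_int x (m : ℤ)
  rwa [Int.cast_natCast] at this

lemma div_aux (n x z q : ℝ) (hn : n ≠ 0) (h : x = z + n * q) : x / n = z / n + q := by
  rw [h, add_div, mul_comm, mul_div_assoc, div_self hn, mul_one]

lemma e2_val_add {n : ℕ} [NeZero n] (a b : ZMod n) :
    e2 (((a + b).val : ℝ) / n) = e2 ((a.val : ℝ) / n) * e2 ((b.val : ℝ) / n) := by
  rw [← e2_add']
  have hn : (n : ℝ) ≠ 0 := Nat.cast_ne_zero.mpr (NeZero.ne n)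
  have h : a.val + b.val = (a + b).val + n * ((a.val + b.val) / n) := by
    rw [ZMod.val_add]; exact (Nat.mod_add_div _ _).symm
  have h' : ((a.val : ℝ) + b.val) = ((a + b).val : ℝ) + n * (((a.val + b.val) / n : ℕ) : ℝ) := by
    exact_mod_cast h
  rw [← add_div, div_aux (n : ℝ) _ _ _ hn h', e2_add_nat]

lemma e2_val_natCast {n : ℕ} [NeZero n] (m : ℕ) :
    e2 ((((m : ZMod n)).val : ℝ) / n) = e2 ((m : ℝ) / n) := by
  have hn : (n : ℝ) ≠ 0 := Nat.cast_ne_zero.mpr (NeZero.ne n)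
  have h : m = (m : ZMod n).val + n * (m / n) := by
    rw [ZMod.val_natCast]; exact (Nat.mod_add_div _ _).symm
  have h' : (m : ℝ) = (((m : ZMod n)).val : ℝ) + n * (((m / n : ℕ)) : ℝ) := by
    exact_mod_cast h
  rw [div_aux (n : ℝ) _ _ _ hn h', e2_add_nat]

lemma e2_val_neg {n : ℕ} [NeZero n] (a : ZMod n) :
    e2 (((-a).val : ℝ) / n) = (starRingEnd ℂ) (e2 ((a.val : ℝ) / n)) := by
  rw [e2_conj']
  have hn : (n : ℝ) ≠ 0 := Nat.cast_ne_zero.mpr (NeZero.ne n)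
  have hd : n ∣ (-a).val + a.val := by
    have h0 : (-a + a) = (0 : ZMod n) := by ring
    have h1 := ZMod.val_add (-a) a
    rw [h0, ZMod.val_zero] at h1
    exact Nat.dvd_of_mod_eq_zero h1.symm
  obtain ⟨q, hq⟩ := hd
  have h' : ((-a).val : ℝ) = -((a.val : ℝ)) + n * (q : ℝ) := by
    have : ((-a).val : ℝ) + a.val = n * q := by exact_mod_cast hq
    linarith
  have := div_aux (n : ℝ) ((-a).val : ℝ) (-(a.val : ℝ)) (q : ℝ) hn h'
  rw [this, neg_div, e2_add_nat]


theorem stmt7 (n : ℕ) (hn : 0 < n) (ω : (ZMod n)ˣ)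
    (k : ℕ) (hk : k = Nat.gcd (((ω : ZMod n) - 1).val) n) (y : ZMod n) :
    cyclicSuperchar n ω (y + ((n / k : ℕ) : ZMod n)) = e2 (1 / (k : ℝ)) * cyclicSuperchar n ω y ∧
    cyclicSuperchar n ω (-y) = (starRingEnd ℂ) (cyclicSuperchar n ω y) := by
  haveI : NeZero n := ⟨hn.ne'⟩
  set c : ZMod n := ((n / k : ℕ) : ZMod n) with hcdef
  have hkpos : 0 < k := by rw [hk]; exact Nat.gcd_pos_of_pos_right _ hn
  have hkn : k ∣ n := hk ▸ Nat.gcd_dvd_right _ _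
  have hkv : k ∣ ((ω : ZMod n) - 1).val := hk ▸ Nat.gcd_dvd_left _ _
  have hc0 : ((ω : ZMod n) - 1) * c = 0 := by
    have h1 : ((ω : ZMod n) - 1) = ((((ω : ZMod n) - 1).val : ℕ) : ZMod n) := by
      rw [ZMod.natCast_val, ZMod.cast_id]
    rw [h1, hcdef, ← Nat.cast_mul, ZMod.natCast_eq_zero_iff]
    obtain ⟨t, ht⟩ := hkv
    exact ⟨t, by rw [ht, mul_comm k t, mul_assoc, Nat.mul_div_cancel' hkn, mul_comm]⟩
  have hωc1 : (ω : ZMod n) * c = c := by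
    have h2 := hc0
    rw [sub_mul, one_mul, sub_eq_zero] at h2
    exact h2
  have hωc : ∀ j : ℕ, ((ω ^ j : (ZMod n)ˣ) : ZMod n) * c = c := by
    intro j
    induction j with
    | zero => simp
    | succ j ih =>
      rw [pow_succ, Units.val_mul, mul_assoc, hωc1, ih]
  have hec : e2 ((c.val : ℝ) / n) = e2 (1 / (k : ℝ)) := by
    rw [hcdef, e2_val_natCast]
    congr 1
    rw [Nat.cast_div hkn (by exact_mod_cast hkpos.ne')]
    field_simp
  constructor
  · rw [cyclicSuperchar, cyclicSuperchar, Finset.mul_sum]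
    refine Finset.sum_congr rfl fun j _ => ?_
    rw [mul_add, hωc j, e2_val_add, hec, mul_comm]
  · rw [cyclicSuperchar, cyclicSuperchar, map_sum]
    refine Finset.sum_congr rfl fun j _ => ?_
    rw [mul_neg, e2_val_neg]
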